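/- For odd n ≥ 3, m(n) ≤ (n+1) · 2^{n-2} + (n-1) · m(n-2). -/

import Mathlib

/-- A family of finsets is `n`-uniform if every hyperedge has `n` elements. -/
def IsUniform (n : ℕ) (E : Finset (Finset ℕ)) : Prop := ∀ e ∈ E, e.card = n

/-- A hypergraph (family of hyperedges) is 2-colorable if there is a Red/Blue
coloring of the vertices such that no hyperedge is monochromatic. -/
def Colorable2 (E : Finset (Finset ℕ)) : Prop :=
  ∃ χ : ℕ → Bool, ∀ e ∈ E, (∃ v ∈ e, χ v = true) ∧ (∃ v ∈ e, χ v = false)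

/-- `m n` is the least number of hyperedges in a non-2-colorable `n`-uniform hypergraph. -/
noncomputable def m (n : ℕ) : ℕ :=
  sInf {k | ∃ E : Finset (Finset ℕ), IsUniform n E ∧ ¬ Colorable2 E ∧ E.card = k}

/-- A hyperedge is monochromatic under `χ` if all its vertices get the same color. -/
def Mono (χ : ℕ → Bool) (s : Finset ℕ) : Prop :=
  (∀ x ∈ s, χ x = true) ∨ (∀ x ∈ s, χ x = false)

namespace FIO

/-- The transposition of `0` and `p`. -/
def sg (p i : ℕ) : ℕ := if i = 0 then p else if i = p then 0 else i

lemma sg_zero (i : ℕ) : sg 0 i = i := by unfold sg; split <;> simp_all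
lemma sg_apply_zero (p : ℕ) : sg p 0 = p := by simp [sg]
lemma sg_apply_self (p : ℕ) : sg p p = 0 := by unfold sg; split <;> simp_all
lemma sg_apply_other (p i : ℕ) (h0 : i ≠ 0) (hp : i ≠ p) : sg p i = i := by
  simp [sg, h0, hp]

lemma sg_invol (p i : ℕ) : sg p (sg p i) = i := by
  unfold sg; rcases eq_or_ne i 0 with rfl | h0
  · simp
  · rcases eq_or_ne i p with rfl | hp
    · simp [h0]
    · simp [h0, hp]

lemma sg_inj (p : ℕ) : Function.Injective (sg p) := by
  intro i j h
  have := congrArg (sg p) h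
  rwa [sg_invol, sg_invol] at this

lemma sg_lt (p i n : ℕ) (hp : p < n) (hi : i < n) (hn : 0 < n) : sg p i < n := by
  unfold sg; split
  · exact hp
  · split
    · exact hn
    · exact hi

def uu (i : ℕ) : ℕ := 3 * i
def vv (i : ℕ) : ℕ := 3 * i + 1

lemma uu_inj : Function.Injective uu := fun a b h => by simpa [uu] using h
lemma vv_inj : Function.Injective vv := fun a b h => by simpa [vv] using h
lemma uu_ne_vv (i j : ℕ) : uu i ≠ vv j := by
  intro h
  have : (3 * i) % 3 = (3 * j + 1) % 3 := by rw [uu, vv] at h; rw [h]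
  omega

/-- parity edge -/
def pedge (n p : ℕ) (S : Finset ℕ) : Finset ℕ :=
  S.image uu ∪ ((Finset.range n) \ S).image (fun j => vv (sg p j))

/-- diagonal edge -/
def dedge (i : ℕ) (e : Finset ℕ) : Finset ℕ := insert (uu i) (insert (vv i) e)

lemma pedge_card (n p : ℕ) (S : Finset ℕ) (hS : S ⊆ Finset.range n) :
    (pedge n p S).card = n := by
  have hinj : Function.Injective (fun j => vv (sg p j)) := fun a b h => sg_inj p (vv_inj h)
  rw [pedge, Finset.card_union_of_disjoint, Finset.card_image_of_injective _ uu_inj,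
    Finset.card_image_of_injective _ hinj, Finset.card_sdiff_of_subset hS,
    Finset.card_range]
  · have := Finset.card_le_card hS
    rw [Finset.card_range] at this
    omega
  · rw [Finset.disjoint_left]
    rintro x hx hy
    obtain ⟨i, _, rfl⟩ := Finset.mem_image.mp hx
    obtain ⟨j, _, hj⟩ := Finset.mem_image.mp hy
    exact uu_ne_vv i (sg p j) hj.symm

lemma mem_pedge (n p : ℕ) (S : Finset ℕ) (x : ℕ) (hx : x ∈ pedge n p S) :
    (∃ i ∈ S, x = uu i) ∨ (∃ j ∈ Finset.range n \ S, x = vv (sg p j)) := by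
  rcases Finset.mem_union.mp hx with h | h
  · obtain ⟨i, hi, rfl⟩ := Finset.mem_image.mp h; exact Or.inl ⟨i, hi, rfl⟩
  · obtain ⟨j, hj, rfl⟩ := Finset.mem_image.mp h; exact Or.inr ⟨j, hj, rfl⟩

/-- when `S` contains both or neither of `0, p`, the `p`-parity edge equals the `0`-one. -/
lemma pedge_eq_of_iff (n p : ℕ) (hp : p < n) (hn : 0 < n) (S : Finset ℕ)
    (h : 0 ∈ S ↔ p ∈ S) : pedge n p S = pedge n 0 S := by
  have himg : (Finset.range n \ S).image (sg p) = Finset.range n \ S := by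
    have hsub : (Finset.range n \ S).image (sg p) ⊆ Finset.range n \ S := by
      intro x hx
      obtain ⟨j, hj, rfl⟩ := Finset.mem_image.mp hx
      obtain ⟨hjr, hjS⟩ := Finset.mem_sdiff.mp hj
      rcases eq_or_ne j 0 with rfl | h0
      · rw [sg_apply_zero]
        exact Finset.mem_sdiff.mpr ⟨Finset.mem_range.mpr hp, fun hpS => hjS (h.mpr hpS)⟩
      rcases eq_or_ne j p with rfl | hpp
      · rw [sg_apply_self]
        exact Finset.mem_sdiff.mpr ⟨Finset.mem_range.mpr hn, fun h0S => hjS (h.mp h0S)⟩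
      rw [sg_apply_other p j h0 hpp]; exact hj
    exact Finset.eq_of_subset_of_card_le hsub
      (le_of_eq (Finset.card_image_of_injective _ (sg_inj p)).symm)

  have h2 : (Finset.range n \ S).image (fun j => vv (sg p j)) =
      (Finset.range n \ S).image (fun j => vv (sg 0 j)) := by
    simp only [sg_zero]
    rw [show (fun j => vv (sg p j)) = vv ∘ (sg p) from rfl, ← Finset.image_image, himg]
  rw [pedge, pedge, h2]

/-- parity injectivity of erase -/
lemma erase_inj_parity (q : ℕ) (T T' : Finset ℕ) (h : T.card % 2 = T'.card % 2)
    (he : T.erase q = T'.erase q) : T = T' := by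
  by_cases h1 : q ∈ T <;> by_cases h2 : q ∈ T'
  · rw [← Finset.insert_erase h1, ← Finset.insert_erase h2, he]
  · exfalso
    rw [Finset.erase_eq_of_notMem h2] at he
    have : T'.card + 1 = T.card := by
      rw [← he, Finset.card_erase_of_mem h1]
      have := Finset.card_pos.mpr ⟨q, h1⟩
      omega
    omega
  · exfalso
    rw [Finset.erase_eq_of_notMem h1] at he
    have : T.card + 1 = T'.card := by
      rw [he, Finset.card_erase_of_mem h2]
      have := Finset.card_pos.mpr ⟨q, h2⟩
      omega
    omega
  · rw [Finset.erase_eq_of_notMem h1] at he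
    rw [Finset.erase_eq_of_notMem h2] at he
    exact he


/-- the odd-cardinality subsets of `range n` -/
def odds (n : ℕ) : Finset (Finset ℕ) :=
  (Finset.range n).powerset.filter (fun S => Odd S.card)

lemma odds_card (n : ℕ) (hn : 1 ≤ n) : (odds n).card ≤ 2 ^ (n - 1) := by
  have h : (odds n).card ≤ ((Finset.range n).erase 0).powerset.card := by
    apply Finset.card_le_card_of_injOn (fun S : Finset ℕ => S.erase 0)
    · intro S hS
      simp only [odds, Finset.mem_coe, Finset.mem_filter, Finset.mem_powerset] at hS
      simp only [Finset.mem_coe, Finset.mem_powerset]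
      exact fun x hx => Finset.mem_erase.mpr
        ⟨Finset.ne_of_mem_erase hx, hS.1 (Finset.mem_of_mem_erase hx)⟩
    · intro S hS T hT he
      simp only [odds, Finset.mem_coe, Finset.mem_filter] at hS hT
      exact erase_inj_parity 0 S T (by
        obtain ⟨_, k1, hk1⟩ := hS; obtain ⟨_, k2, hk2⟩ := hT; omega) he
  calc (odds n).card ≤ ((Finset.range n).erase 0).powerset.card := h
    _ = 2 ^ (n - 1) := by
      rw [Finset.card_powerset, Finset.card_erase_of_mem
        (Finset.mem_range.mpr (by omega)), Finset.card_range]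

/-- the predicate: exactly one of `0, p` belongs to `S` -/
def xone (p : ℕ) (S : Finset ℕ) : Prop := (0 ∈ S ∧ p ∉ S) ∨ (p ∈ S ∧ 0 ∉ S)

instance (p : ℕ) (S : Finset ℕ) : Decidable (xone p S) := by unfold xone; infer_instance

lemma xone_card (n p : ℕ) (hn : 3 ≤ n) (hp : p < n) (hp0 : p ≠ 0) :
    ((odds n).filter (xone p)).card ≤ 2 ^ (n - 2) := by
  set q : ℕ := if p = 1 then 2 else 1 with hq
  have hq0 : q ≠ 0 := by rw [hq]; split <;> omega
  have hqp : q ≠ p := by rw [hq]; split <;> omega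
  have hqn : q < n := by rw [hq]; split <;> omega
  set R : Finset ℕ := (((Finset.range n).erase 0).erase p).erase q with hR
  have hRcard : R.card = n - 3 := by
    rw [hR, Finset.card_erase_of_mem (Finset.mem_erase.mpr ⟨hqp, Finset.mem_erase.mpr
        ⟨hq0, Finset.mem_range.mpr hqn⟩⟩),
      Finset.card_erase_of_mem (Finset.mem_erase.mpr ⟨hp0, Finset.mem_range.mpr hp⟩),
      Finset.card_erase_of_mem (Finset.mem_range.mpr (show 0 < n by omega)),
      Finset.card_range]
    omega
  -- the erased set has card one less
  have hc : ∀ U : Finset ℕ, Odd U.card → xone p U →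
      ((U.erase 0).erase p).card = U.card - 1 := by
    intro U _ hx
    rcases hx with ⟨h0U, hpU⟩ | ⟨hpU, h0U⟩
    · rw [Finset.erase_eq_of_notMem (fun h => hpU (Finset.mem_of_mem_erase h)),
        Finset.card_erase_of_mem h0U]
    · rw [Finset.erase_eq_of_notMem h0U, Finset.card_erase_of_mem hpU]
  have h : ((odds n).filter (xone p)).card ≤ (R.powerset ×ˢ (Finset.univ : Finset Bool)).card := by
    apply Finset.card_le_card_of_injOn
      (fun S : Finset ℕ => ((((S.erase 0).erase p).erase q : Finset ℕ), (decide (0 ∈ S) : Bool)))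
    · intro S hS
      simp only [Finset.mem_coe, Finset.mem_filter, odds, Finset.mem_powerset] at hS
      simp only [Finset.mem_coe, Finset.mem_product, Finset.mem_powerset, Finset.mem_univ, and_true]
      intro x hx
      simp only [Finset.mem_erase, hR] at hx ⊢
      exact ⟨hx.1, hx.2.1, hx.2.2.1, hS.1.1 hx.2.2.2⟩
    · intro S hS T hT he
      simp only [Finset.mem_coe, Finset.mem_filter, odds, Finset.mem_powerset] at hS hT
      obtain ⟨⟨hSsub, hSodd⟩, hSx⟩ := hS
      obtain ⟨⟨hTsub, hTodd⟩, hTx⟩ := hT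
      have h0 : (0 ∈ S) ↔ (0 ∈ T) := by
        have h2 := congrArg Prod.snd he
        simp only at h2
        constructor <;> intro hh <;> [skip; skip] <;> by_contra hcon <;> simp [hh, hcon] at h2
      have h1 : ((S.erase 0).erase p).erase q = ((T.erase 0).erase p).erase q :=
        congrArg Prod.fst he
      have hcS := hc S hSodd hSx
      have hcT := hc T hTodd hTx
      obtain ⟨k1, hk1⟩ := hSodd
      obtain ⟨k2, hk2⟩ := hTodd
      have h2 : (S.erase 0).erase p = (T.erase 0).erase p :=
        erase_inj_parity q _ _ (by omega) h1
      -- reconstruct S = T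
      rcases hSx with ⟨h0S, hpS⟩ | ⟨hpS, h0S⟩
      · have h0T : 0 ∈ T := h0.mp h0S
        have hpT : p ∉ T := by
          rcases hTx with ⟨_, h⟩ | ⟨_, h⟩
          · exact h
          · exact absurd h0T h
        rw [Finset.erase_eq_of_notMem (fun h => hpS (Finset.mem_of_mem_erase h)),
          Finset.erase_eq_of_notMem (fun h => hpT (Finset.mem_of_mem_erase h))] at h2
        rw [← Finset.insert_erase h0S, h2, Finset.insert_erase h0T]
      · have h0T : 0 ∉ T := fun h => h0S (h0.mpr h)
        have hpT : p ∈ T := by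
          rcases hTx with ⟨h, _⟩ | ⟨h, _⟩
          · exact absurd h h0T
          · exact h
        rw [Finset.erase_eq_of_notMem h0S, Finset.erase_eq_of_notMem h0T] at h2
        rw [← Finset.insert_erase hpS, h2, Finset.insert_erase hpT]
  calc ((odds n).filter (xone p)).card ≤ (R.powerset ×ˢ (Finset.univ : Finset Bool)).card := h
    _ = 2 ^ (n - 3) * 2 := by
      rw [Finset.card_product, Finset.card_powerset, hRcard, Finset.card_univ, Fintype.card_bool]
    _ ≤ 2 ^ (n - 2) := by
      have h3 : n - 2 = (n - 3) + 1 := by omega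
      rw [h3, pow_succ]


/-- the complete hypergraph witness: the set defining `m k` is nonempty. -/
lemma m_set_nonempty (k : ℕ) (hk : 1 ≤ k) :
    {j | ∃ E : Finset (Finset ℕ), IsUniform k E ∧ ¬ Colorable2 E ∧ E.card = j}.Nonempty := by
  refine ⟨((Finset.range (2 * k - 1)).powersetCard k).card,
    (Finset.range (2 * k - 1)).powersetCard k, ?_, ?_, rfl⟩
  · intro e he
    exact (Finset.mem_powersetCard.mp he).2
  · rintro ⟨χ, hχ⟩
    set s := Finset.range (2 * k - 1) with hs
    have hcard := Finset.card_filter_add_card_filter_not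
      (s := s) (p := fun x => χ x = true)
    rw [Finset.card_range] at hcard
    rcases le_or_gt k (s.filter (fun x => χ x = true)).card with h | h
    · obtain ⟨t, ht, htc⟩ := Finset.exists_subset_card_eq h
      have htmem : t ∈ (Finset.range (2 * k - 1)).powersetCard k :=
        Finset.mem_powersetCard.mpr ⟨ht.trans (Finset.filter_subset _ _), htc⟩
      obtain ⟨_, v, hv, hvf⟩ := hχ t htmem
      have := (Finset.mem_filter.mp (ht hv)).2
      simp [this] at hvf
    · have h2 : k ≤ (s.filter (fun x => ¬ χ x = true)).card := by omega
      obtain ⟨t, ht, htc⟩ := Finset.exists_subset_card_eq h2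
      have htmem : t ∈ (Finset.range (2 * k - 1)).powersetCard k :=
        Finset.mem_powersetCard.mpr ⟨ht.trans (Finset.filter_subset _ _), htc⟩
      obtain ⟨⟨v, hv, hvt⟩, _⟩ := hχ t htmem
      have := (Finset.mem_filter.mp (ht hv)).2
      simp [hvt] at this

/-- an extremal core hypergraph, relabeled so vertices are `≡ 2 mod 3`. -/
lemma exists_core (k : ℕ) (hk : 1 ≤ k) :
    ∃ E₀ : Finset (Finset ℕ), IsUniform k E₀ ∧ ¬ Colorable2 E₀ ∧ E₀.card ≤ m k ∧
      ∀ e ∈ E₀, ∀ x ∈ e, x % 3 = 2 := by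
  obtain ⟨E, hU, hNC, hcard⟩ := Nat.sInf_mem (m_set_nonempty k hk)
  set g : ℕ → ℕ := fun x => 3 * x + 2 with hg
  have hginj : Function.Injective g := fun a b h => by simp [hg] at h; omega
  refine ⟨E.image (fun e => e.image g), ?_, ?_, ?_, ?_⟩
  · intro e he
    obtain ⟨e₀, he₀, rfl⟩ := Finset.mem_image.mp he
    rw [Finset.card_image_of_injective _ hginj]
    exact hU e₀ he₀
  · rintro ⟨χ, hχ⟩
    refine hNC ⟨fun x => χ (g x), fun e he => ?_⟩
    obtain ⟨⟨v, hv, hvt⟩, ⟨w, hw, hwf⟩⟩ := hχ (e.image g) (Finset.mem_image_of_mem _ he)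
    obtain ⟨v₀, hv₀, rfl⟩ := Finset.mem_image.mp hv
    obtain ⟨w₀, hw₀, rfl⟩ := Finset.mem_image.mp hw
    exact ⟨⟨v₀, hv₀, hvt⟩, ⟨w₀, hw₀, hwf⟩⟩
  · calc (E.image (fun e => e.image g)).card ≤ E.card := Finset.card_image_le
      _ = m k := hcard
  · intro e he x hx
    obtain ⟨e₀, he₀, rfl⟩ := Finset.mem_image.mp he
    obtain ⟨x₀, hx₀, rfl⟩ := Finset.mem_image.mp hx
    simp [hg]

/-- the big `n`-uniform hypergraph built on a core `C` -/
def bigE (n : ℕ) (C : Finset (Finset ℕ)) : Finset (Finset ℕ) :=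
  ((Finset.Ico 1 n) ×ˢ C).image (fun q => dedge q.1 q.2) ∪
  ((odds n).image (pedge n 0) ∪
   ((Finset.range n).erase 0).biUnion
     (fun p => ((odds n).filter (xone p)).image (pedge n p)))

lemma mem_bigE_dedge (n : ℕ) (C : Finset (Finset ℕ)) (i : ℕ) (e : Finset ℕ)
    (h1 : 1 ≤ i) (h2 : i < n) (he : e ∈ C) : dedge i e ∈ bigE n C := by
  apply Finset.mem_union_left
  exact Finset.mem_image.mpr ⟨(i, e), Finset.mem_product.mpr
    ⟨Finset.mem_Ico.mpr ⟨h1, h2⟩, he⟩, rfl⟩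

lemma mem_bigE_pedge (n : ℕ) (C : Finset (Finset ℕ)) (p : ℕ) (S : Finset ℕ)
    (hn : 0 < n) (hp : p < n) (hS : S ⊆ Finset.range n) (hodd : Odd S.card) :
    pedge n p S ∈ bigE n C := by
  apply Finset.mem_union_right
  have hSo : S ∈ odds n := Finset.mem_filter.mpr ⟨Finset.mem_powerset.mpr hS, hodd⟩
  rcases eq_or_ne p 0 with rfl | hp0
  · exact Finset.mem_union_left _ (Finset.mem_image_of_mem _ hSo)
  by_cases hx : xone p S
  · refine Finset.mem_union_right _ (Finset.mem_biUnion.mpr ⟨p,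
      Finset.mem_erase.mpr ⟨hp0, Finset.mem_range.mpr hp⟩,
      Finset.mem_image_of_mem _ (Finset.mem_filter.mpr ⟨hSo, hx⟩)⟩)
  · have hiff : 0 ∈ S ↔ p ∈ S := by
      unfold xone at hx; push_neg at hx; tauto
    rw [pedge_eq_of_iff n p hp hn S hiff]
    exact Finset.mem_union_left _ (Finset.mem_image_of_mem _ hSo)

lemma bigE_uniform (n : ℕ) (C : Finset (Finset ℕ)) (hn : 3 ≤ n)
    (hCU : IsUniform (n - 2) C) (hmod : ∀ e ∈ C, ∀ x ∈ e, x % 3 = 2) :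
    IsUniform n (bigE n C) := by
  intro e he
  rcases Finset.mem_union.mp he with hD | hP
  · obtain ⟨⟨i, e₀⟩, hmem, rfl⟩ := Finset.mem_image.mp hD
    obtain ⟨hi, he₀⟩ := Finset.mem_product.mp hmem
    have hv : vv i ∉ e₀ := fun h => by
      have := hmod e₀ he₀ _ h; simp [vv] at this
    have hu : uu i ∉ insert (vv i) e₀ := by
      intro h
      rcases Finset.mem_insert.mp h with h | h
      · exact uu_ne_vv i i h
      · have := hmod e₀ he₀ _ h; simp [uu] at this
    rw [dedge, Finset.card_insert_of_notMem hu, Finset.card_insert_of_notMem hv,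
      hCU e₀ he₀]
    omega
  rcases Finset.mem_union.mp hP with h0 | hp
  · obtain ⟨S, hS, rfl⟩ := Finset.mem_image.mp h0
    exact pedge_card n 0 S (Finset.mem_powerset.mp (Finset.mem_filter.mp hS).1)
  · obtain ⟨p, _, hmem⟩ := Finset.mem_biUnion.mp hp
    obtain ⟨S, hS, rfl⟩ := Finset.mem_image.mp hmem
    exact pedge_card n p S
      (Finset.mem_powerset.mp (Finset.mem_filter.mp (Finset.mem_filter.mp hS).1).1)

lemma bigE_not_col (n : ℕ) (C : Finset (Finset ℕ)) (hn : 3 ≤ n) (hodd : Odd n)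
    (hC : ¬ Colorable2 C) : ¬ Colorable2 (bigE n C) := by
  rintro ⟨χ, hχ⟩
  -- no edge is monochromatic
  have hnm : ∀ e ∈ bigE n C, ∀ c : Bool, ¬ (∀ x ∈ e, χ x = c) := by
    intro e he c hall
    obtain ⟨⟨v1, hv1, hv1t⟩, ⟨v2, hv2, hv2f⟩⟩ := hχ e he
    cases c
    · rw [hall v1 hv1] at hv1t; exact Bool.false_ne_true hv1t
    · rw [hall v2 hv2] at hv2f; simp at hv2f
  -- monochromatic parity edges would contradict hnm
  have mkmono : ∀ p, p < n → ∀ S ⊆ Finset.range n, Odd S.card → ∀ d : Bool,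
      (∀ i ∈ S, χ (uu i) = d) → (∀ j, j < n → j ∉ S → χ (vv (sg p j)) = d) → False := by
    intro p hp S hS hSodd d h1 h2
    refine hnm (pedge n p S) (mem_bigE_pedge n C p S (by omega) hp hS hSodd) d ?_
    intro x hx
    rcases mem_pedge n p S x hx with ⟨i, hi, rfl⟩ | ⟨j, hj, rfl⟩
    · exact h1 i hi
    · obtain ⟨hjr, hjS⟩ := Finset.mem_sdiff.mp hj
      exact h2 j (Finset.mem_range.mp hjr) hjS
  -- key: every diagonal color appears, for every pairing p
  have key : ∀ p, p < n → ∀ c : Bool, ∃ i, i < n ∧ χ (uu i) = c ∧ χ (vv (sg p i)) = c := by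
    intro p hp c
    by_contra hcon
    push_neg at hcon
    set W := (Finset.range n).filter (fun i => χ (vv (sg p i)) = c) with hW
    set A := (Finset.range n).filter (fun i => χ (uu i) = !c) with hA
    have hWA : W ⊆ A := by
      intro i hi
      obtain ⟨hir, hib⟩ := Finset.mem_filter.mp hi
      refine Finset.mem_filter.mpr ⟨hir, Bool.eq_not_iff.mpr fun hc' => ?_⟩
      exact (hcon i (Finset.mem_range.mp hir) hc') hib
    have hWmem : ∀ j, j < n → j ∉ W → χ (vv (sg p j)) = !c := by
      intro j hj hjW
      refine Bool.eq_not_iff.mpr fun hc' => hjW ?_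
      exact Finset.mem_filter.mpr ⟨Finset.mem_range.mpr hj, hc'⟩
    by_cases hWodd : Odd W.card
    · exact mkmono p hp W (Finset.filter_subset _ _) hWodd (!c)
        (fun i hi => (Finset.mem_filter.mp (hWA hi)).2)
        (fun j hj hjW => hWmem j hj hjW)
    by_cases hAodd : Odd A.card
    · exact mkmono p hp A (Finset.filter_subset _ _) hAodd (!c)
        (fun i hi => (Finset.mem_filter.mp hi).2)
        (fun j hj hjA => hWmem j hj (fun hw => hjA (hWA hw)))
    by_cases hWAeq : W = A
    · -- complement: all u-colors c on range n \ W, all v-colors c on W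
      have hWsub : W ⊆ Finset.range n := Finset.filter_subset _ _
      have hcard : (Finset.range n \ W).card = n - W.card := by
        rw [Finset.card_sdiff_of_subset hWsub, Finset.card_range]
      refine mkmono p hp (Finset.range n \ W) (Finset.sdiff_subset) ?_ c ?_ ?_
      · rw [hcard]
        exact Nat.Odd.sub_even (by simpa using Finset.card_le_card hWsub)
          hodd (Nat.not_odd_iff_even.mp hWodd)
      · intro i hi
        obtain ⟨hir, hiW⟩ := Finset.mem_sdiff.mp hi
        rw [hWAeq] at hiW
        have : ¬ χ (uu i) = !c := fun h => hiW (Finset.mem_filter.mpr ⟨hir, h⟩)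
        simpa using this
      · intro j hj hjS
        have hjW : j ∈ W := by
          by_contra hjW
          exact hjS (Finset.mem_sdiff.mpr ⟨Finset.mem_range.mpr hj, hjW⟩)
        exact (Finset.mem_filter.mp hjW).2
    · -- W ⊊ A : insert a vertex
      obtain ⟨x, hxA, hxW⟩ := Finset.exists_of_ssubset (Finset.ssubset_iff_subset_ne.mpr ⟨hWA, hWAeq⟩)
      refine mkmono p hp (insert x W)
        (Finset.insert_subset ((Finset.filter_subset _ _) hxA) (Finset.filter_subset _ _))
        ?_ (!c) ?_ ?_
      · rw [Finset.card_insert_of_notMem hxW]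
        exact Even.add_one (Nat.not_odd_iff_even.mp hWodd)
      · intro i hi
        rcases Finset.mem_insert.mp hi with rfl | hi
        · exact (Finset.mem_filter.mp hxA).2
        · exact (Finset.mem_filter.mp (hWA hi)).2
      · intro j hj hjS
        exact hWmem j hj (fun hw => hjS (Finset.mem_insert_of_mem hw))
  -- the core has a monochromatic edge
  obtain ⟨e₀, he₀, c, hc⟩ : ∃ e ∈ C, ∃ c : Bool, ∀ x ∈ e, χ x = c := by
    by_contra hcon
    push_neg at hcon
    refine hC ⟨χ, fun e he => ?_⟩
    have h1 := hcon e he true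
    have h2 := hcon e he false
    obtain ⟨v1, hv1, hv1t⟩ := h1
    obtain ⟨v2, hv2, hv2f⟩ := h2
    exact ⟨⟨v2, hv2, by simpa using hv2f⟩, ⟨v1, hv1, by simpa using hv1t⟩⟩
  -- diagonal pairs cannot both have the core color
  have hdiag : ∀ i, 1 ≤ i → i < n → ¬ (χ (uu i) = c ∧ χ (vv i) = c) := by
    rintro i h1 h2 ⟨ha, hb⟩
    refine hnm (dedge i e₀) (mem_bigE_dedge n C i e₀ h1 h2 he₀) c ?_
    intro x hx
    rcases Finset.mem_insert.mp hx with rfl | hx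
    · exact ha
    rcases Finset.mem_insert.mp hx with rfl | hx
    · exact hb
    · exact hc x hx
  obtain ⟨i0, hi0n, ha0, hb0⟩ := key 0 (by omega) c
  rw [sg_zero] at hb0
  have hi00 : i0 = 0 := by
    by_contra h
    exact hdiag i0 (by omega) hi0n ⟨ha0, hb0⟩
  subst hi00
  obtain ⟨j, hjn, haj, hbj⟩ := key 0 (by omega) (!c)
  rw [sg_zero] at hbj
  have hj0 : j ≠ 0 := by
    rintro rfl
    rw [ha0] at haj
    simp at haj
  obtain ⟨i, hin, hai, hbi⟩ := key j hjn c
  rcases eq_or_ne i 0 with rfl | hi0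
  · rw [sg_apply_zero] at hbi
    rw [hbi] at hbj
    simp at hbj
  rcases eq_or_ne i j with rfl | hij
  · rw [hai] at haj
    simp at haj
  · rw [sg_apply_other j i hi0 hij] at hbi
    exact hdiag i (by omega) hin ⟨hai, hbi⟩

lemma bigE_card (n : ℕ) (C : Finset (Finset ℕ)) (hn : 3 ≤ n) :
    (bigE n C).card ≤ (n - 1) * C.card + (n + 1) * 2 ^ (n - 2) := by
  have hD : (((Finset.Ico 1 n) ×ˢ C).image (fun q => dedge q.1 q.2)).card
      ≤ (n - 1) * C.card := by
    refine Finset.card_image_le.trans ?_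
    rw [Finset.card_product, Nat.card_Ico]
  have hP0 : ((odds n).image (pedge n 0)).card ≤ 2 ^ (n - 1) :=
    Finset.card_image_le.trans (odds_card n (by omega))
  have hPP : (((Finset.range n).erase 0).biUnion
      (fun p => ((odds n).filter (xone p)).image (pedge n p))).card
      ≤ (n - 1) * 2 ^ (n - 2) := by
    refine (Finset.card_biUnion_le).trans ?_
    have h1 : ∀ p ∈ (Finset.range n).erase 0,
        (((odds n).filter (xone p)).image (pedge n p)).card ≤ 2 ^ (n - 2) := by
      intro p hp
      obtain ⟨hp0, hpr⟩ := Finset.mem_erase.mp hp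
      exact Finset.card_image_le.trans (xone_card n p hn (Finset.mem_range.mp hpr) hp0)
    calc ∑ p ∈ (Finset.range n).erase 0,
          (((odds n).filter (xone p)).image (pedge n p)).card
        ≤ ∑ _p ∈ (Finset.range n).erase 0, 2 ^ (n - 2) := Finset.sum_le_sum h1
      _ = (n - 1) * 2 ^ (n - 2) := by
        rw [Finset.sum_const, smul_eq_mul,
          Finset.card_erase_of_mem (Finset.mem_range.mpr (by omega)), Finset.card_range]
  have harith : 2 ^ (n - 1) + (n - 1) * 2 ^ (n - 2) = (n + 1) * 2 ^ (n - 2) := by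
    have h2 : 2 ^ (n - 1) = 2 * 2 ^ (n - 2) := by
      rw [show n - 1 = (n - 2) + 1 from by omega, pow_succ, mul_comm]
    rw [h2, show n + 1 = 2 + (n - 1) from by omega, Nat.add_mul]
  calc (bigE n C).card
      ≤ (((Finset.Ico 1 n) ×ˢ C).image (fun q => dedge q.1 q.2)).card
        + (((odds n).image (pedge n 0)).card
          + (((Finset.range n).erase 0).biUnion
            (fun p => ((odds n).filter (xone p)).image (pedge n p))).card) :=
        (Finset.card_union_le _ _).trans (by gcongr; exact Finset.card_union_le _ _)
    _ ≤ (n - 1) * C.card + (2 ^ (n - 1) + (n - 1) * 2 ^ (n - 2)) := by gcongr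
    _ = (n - 1) * C.card + (n + 1) * 2 ^ (n - 2) := by rw [harith]

end FIO

/-- First improved recurrence (odd case): for odd `n ≥ 3`,
`m n ≤ (n+1) * 2^(n-2) + (n-1) * m (n-2)`. -/
theorem first_improvement_odd (n : ℕ) (hn : 3 ≤ n) (hodd : Odd n) :
    m n ≤ (n + 1) * 2 ^ (n - 2) + (n - 1) * m (n - 2) := by
  obtain ⟨C, hCU, hCNC, hCcard, hCmod⟩ := FIO.exists_core (n - 2) (by omega)
  have hU := FIO.bigE_uniform n C hn hCU hCmod
  have hNC := FIO.bigE_not_col n C hn hodd hCNC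
  have h1 : m n ≤ (FIO.bigE n C).card := Nat.sInf_le ⟨FIO.bigE n C, hU, hNC, rfl⟩
  calc m n ≤ (FIO.bigE n C).card := h1
    _ ≤ (n - 1) * C.card + (n + 1) * 2 ^ (n - 2) := FIO.bigE_card n C hn
    _ ≤ (n - 1) * m (n - 2) + (n + 1) * 2 ^ (n - 2) := by gcongr
    _ = (n + 1) * 2 ^ (n - 2) + (n - 1) * m (n - 2) := Nat.add_comm _ _
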